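/- Let F : [α,β] → C^1([0,1],[0,1]) be a family of l-modal maps (continuous for the C^1 topology, each f_γ a C^1 l-modal map with laps I_1(γ),…,I_{l+1}(γ)), let y : [α,β] → (0,1) be continuous, let n ≥ 1, and let S = S_0 S_1 ⋯ S_{n−1} be a word over the lap symbols {I_1,…,I_{l+1}}. For γ ∈ [α,β] call x ∈ [0,1] a pullback of y(γ) of type S if f_γ^n(x) = y(γ) and f_γ^k(x) ∈ I_{S_k}(γ) for every 0 ≤ k < n. Then: (i) for each γ there is at most one pullback x_γ of y(γ) of type S; (ii) the set D ⊆ [α,β] of parameters γ for which x_γ exists is open in [α,β]; (iii) the map γ ↦ x_γ is continuous on D. -/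

import Mathlib

open Set Metric

noncomputable section

/-- Endpoints of the laps of an `l`-modal map with turning points `c`. -/
def lapPts (l : ℕ) (c : Fin l → ℝ) (i : Fin (l + 2)) : ℝ :=
  if h0 : (i : ℕ) = 0 then 0
  else if hl : (i : ℕ) = l + 1 then 1
  else c ⟨(i : ℕ) - 1, by have := i.isLt; omega⟩

/-- The `i`-th (closed) lap of an `l`-modal map with turning points `c`. -/
def lap (l : ℕ) (c : Fin l → ℝ) (i : Fin (l + 1)) : Set ℝ :=
  Icc (lapPts l c i.castSucc) (lapPts l c i.succ)

/-- The `j`-th lap as in the paper: `I_1 = [0,c_1)`, `I_j = (c_{j-1},c_j)` and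
`I_{l+1} = (c_l,1]`. -/
def openLap (l : ℕ) (c : Fin l → ℝ) (j : Fin (l + 1)) : Set ℝ :=
  Ioo (lapPts l c j.castSucc) (lapPts l c j.succ)
    ∪ (if (j : ℕ) = 0 then {0} else (∅ : Set ℝ))
    ∪ (if (j : ℕ) = l then {1} else (∅ : Set ℝ))

/-- `f` is an `l`-modal map of `[0,1]` with turning points `c 0 < … < c (l-1)`. -/
def IsLModal (l : ℕ) (f : ℝ → ℝ) (c : Fin l → ℝ) : Prop :=
  StrictMono c ∧ (∀ i, c i ∈ Ioo (0:ℝ) 1) ∧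
  MapsTo f (Icc 0 1) (Icc 0 1) ∧
  f 0 ∈ ({0, 1} : Set ℝ) ∧ f 1 ∈ ({0, 1} : Set ℝ) ∧
  ∃ s : Fin (l + 1) → Bool,
    (∀ i : Fin l, s i.castSucc ≠ s i.succ) ∧
    (∀ i, if s i then StrictMonoOn f (lap l c i) else StrictAntiOn f (lap l c i))

/-- `f` is a `C¹` `l`-modal map with turning points `c`. -/
def IsC1LModal (l : ℕ) (f : ℝ → ℝ) (c : Fin l → ℝ) : Prop :=
  IsLModal l f c ∧ ContDiff ℝ 1 f ∧
  ∀ x ∈ Icc (0:ℝ) 1, (∀ i, x ≠ c i) → deriv f x ≠ 0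

/-- Continuity of the family `γ ↦ F γ` on `[a,b]` with respect to the `C¹` topology. -/
def C1FamilyOn (F : ℝ → ℝ → ℝ) (a b : ℝ) : Prop :=
  ∀ γ₀ ∈ Icc a b, ∀ ε > (0:ℝ), ∃ δ > (0:ℝ), ∀ γ ∈ Icc a b, |γ - γ₀| < δ →
    ∀ x ∈ Icc (0:ℝ) 1, |F γ x - F γ₀ x| < ε ∧ |deriv (F γ) x - deriv (F γ₀) x| < ε

/-- `x` is a pullback of `y γ` of the combinatorial type `S` under `f_γ = F γ`:
`f_γ^n x = y γ` and `f_γ^k x` lies in the lap `I_{S k}` for every `k < n`. -/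
def PullbackOfType (l : ℕ) (F : ℝ → ℝ → ℝ) (c : ℝ → Fin l → ℝ) (y : ℝ → ℝ)
    (n : ℕ) (S : Fin n → Fin (l + 1)) (γ x : ℝ) : Prop :=
  (F γ)^[n] x = y γ ∧ ∀ k : Fin n, (F γ)^[(k : ℕ)] x ∈ openLap l (c γ) (S k)

/-- Pullbacks of a prescribed combinatorial type: they are unique, their domain of
definition is open in `[α,β]`, and they depend continuously on the parameter. -/
lemma lapPts_of_ne {l : ℕ} (c : Fin l → ℝ) {i : Fin (l+2)} (h0 : (i:ℕ) ≠ 0)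
    (hl : (i:ℕ) ≠ l + 1) :
    lapPts l c i = c ⟨(i : ℕ) - 1, by have := i.isLt; omega⟩ := by
  simp [lapPts, h0, hl]

lemma lapPts_of_zero {l : ℕ} (c : Fin l → ℝ) {i : Fin (l+2)} (h0 : (i:ℕ) = 0) :
    lapPts l c i = 0 := by simp [lapPts, h0]

lemma lapPts_of_last {l : ℕ} (c : Fin l → ℝ) {i : Fin (l+2)} (hl : (i:ℕ) = l + 1) :
    lapPts l c i = 1 := by
  have : (i:ℕ) ≠ 0 := by omega
  simp [lapPts, this, hl]

lemma lapPts_lt {l : ℕ} {c : Fin l → ℝ} (hc : StrictMono c) (hc01 : ∀ i, c i ∈ Ioo (0:ℝ) 1)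
    {i j : Fin (l+2)} (hij : (i:ℕ) < (j:ℕ)) : lapPts l c i < lapPts l c j := by
  have hj := j.isLt
  rcases Nat.eq_zero_or_pos (i:ℕ) with h0 | h0
  · rw [lapPts_of_zero c h0]
    rcases eq_or_ne (j:ℕ) (l+1) with hl | hl
    · rw [lapPts_of_last c hl]; exact zero_lt_one
    · rw [lapPts_of_ne c (by omega) hl]; exact (hc01 _).1
  · have hi0 : (i:ℕ) ≠ 0 := by omega
    have hil : (i:ℕ) ≠ l + 1 := by omega
    rw [lapPts_of_ne c hi0 hil]
    rcases eq_or_ne (j:ℕ) (l+1) with hl | hl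
    · rw [lapPts_of_last c hl]; exact (hc01 _).2
    · rw [lapPts_of_ne c (by omega) hl]
      exact hc (by simp only [Fin.mk_lt_mk]; omega)

lemma lapPts_mem {l : ℕ} {c : Fin l → ℝ} (hc01 : ∀ i, c i ∈ Ioo (0:ℝ) 1)
    (i : Fin (l+2)) : lapPts l c i ∈ Icc (0:ℝ) 1 := by
  unfold lapPts
  split_ifs with h0 hl
  · exact ⟨le_refl 0, zero_le_one⟩
  · exact ⟨zero_le_one, le_refl 1⟩
  · exact ⟨(hc01 _).1.le, (hc01 _).2.le⟩

lemma castSucc_val {l : ℕ} (j : Fin (l+1)) : ((j.castSucc : Fin (l+2)) : ℕ) = (j:ℕ) := rfl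

lemma succ_val {l : ℕ} (j : Fin (l+1)) : ((j.succ : Fin (l+2)) : ℕ) = (j:ℕ) + 1 := rfl

lemma openLap_subset_lap {l : ℕ} {c : Fin l → ℝ} (hc01 : ∀ i, c i ∈ Ioo (0:ℝ) 1)
    (j : Fin (l+1)) : openLap l c j ⊆ lap l c j := by
  intro x hx
  rcases hx with (hx | hx) | hx
  · exact Ioo_subset_Icc_self hx
  · split_ifs at hx with h
    · rcases hx with rfl
      have h0 : lapPts l c j.castSucc = 0 := lapPts_of_zero c (by rw [castSucc_val, h])
      exact ⟨h0.le, (lapPts_mem hc01 j.succ).1⟩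
    · exact absurd hx (Set.notMem_empty x)
  · split_ifs at hx with h
    · rcases hx with rfl
      have h1 : lapPts l c j.succ = 1 := lapPts_of_last c (by rw [succ_val, h])
      exact ⟨(lapPts_mem hc01 j.castSucc).2, h1.ge⟩
    · exact absurd hx (Set.notMem_empty x)

lemma openLap_subset_Icc {l : ℕ} {c : Fin l → ℝ} (hc01 : ∀ i, c i ∈ Ioo (0:ℝ) 1)
    (j : Fin (l+1)) : openLap l c j ⊆ Icc (0:ℝ) 1 := fun x hx => by
  have := openLap_subset_lap hc01 j hx
  exact ⟨(lapPts_mem hc01 j.castSucc).1.trans this.1, this.2.trans (lapPts_mem hc01 j.succ).2⟩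

lemma Ioo_subset_openLap {l : ℕ} (c : Fin l → ℝ) (j : Fin (l+1)) :
    Ioo (lapPts l c j.castSucc) (lapPts l c j.succ) ⊆ openLap l c j :=
  fun x hx => Or.inl (Or.inl hx)

lemma lapPts_le {l : ℕ} {c : Fin l → ℝ} (hc : StrictMono c) (hc01 : ∀ i, c i ∈ Ioo (0:ℝ) 1)
    {i j : Fin (l+2)} (hij : (i:ℕ) ≤ (j:ℕ)) : lapPts l c i ≤ lapPts l c j := by
  rcases eq_or_lt_of_le hij with h | h
  · rw [Fin.ext (by exact h : (i:ℕ) = (j:ℕ))]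
  · exact (lapPts_lt hc hc01 h).le

lemma deriv_nonneg_of_strictMonoOn {f : ℝ → ℝ} {p q x : ℝ}
    (hd : DifferentiableAt ℝ f x) (hx : x ∈ Ioo p q) (hm : StrictMonoOn f (Icc p q)) :
    0 ≤ deriv f x := by
  have h := hd.hasDerivAt
  rw [hasDerivAt_iff_tendsto_slope] at h
  have h' : Filter.Tendsto (slope f x) (nhdsWithin x (Ioi x)) (nhds (deriv f x)) :=
    h.mono_left (nhdsWithin_mono x (fun z hz => ne_of_gt hz))
  refine ge_of_tendsto h' ?_
  filter_upwards [Ioo_mem_nhdsGT_of_mem ⟨le_refl x, hx.2⟩] with z hz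
  rw [slope_def_field]
  have hfz : f x < f z := hm ⟨hx.1.le, hx.2.le⟩ ⟨hx.1.le.trans hz.1.le, hz.2.le⟩ hz.1
  have h1 : (0:ℝ) < z - x := by linarith [hz.1]
  have h2 : (0:ℝ) ≤ f z - f x := by linarith
  exact div_nonneg h2 h1.le

lemma deriv_nonpos_of_strictAntiOn {f : ℝ → ℝ} {p q x : ℝ}
    (hd : DifferentiableAt ℝ f x) (hx : x ∈ Ioo p q) (hm : StrictAntiOn f (Icc p q)) :
    deriv f x ≤ 0 := by
  have h := hd.hasDerivAt
  rw [hasDerivAt_iff_tendsto_slope] at h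
  have h' : Filter.Tendsto (slope f x) (nhdsWithin x (Ioi x)) (nhds (deriv f x)) :=
    h.mono_left (nhdsWithin_mono x (fun z hz => ne_of_gt hz))
  refine le_of_tendsto h' ?_
  filter_upwards [Ioo_mem_nhdsGT_of_mem ⟨le_refl x, hx.2⟩] with z hz
  rw [slope_def_field]
  have hfz : f z < f x := hm ⟨hx.1.le, hx.2.le⟩ ⟨hx.1.le.trans hz.1.le, hz.2.le⟩ hz.1
  have h1 : (0:ℝ) < z - x := by linarith [hz.1]
  exact div_nonpos_of_nonpos_of_nonneg (by linarith) h1.le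

lemma strictMono_fin_le {m : ℕ} {f : Fin m → Fin m} (hf : StrictMono f) :
    ∀ i : Fin m, i ≤ f i := by
  have key : ∀ k : ℕ, ∀ i : Fin m, (i : ℕ) = k → k ≤ (f i : ℕ) := by
    intro k
    induction k with
    | zero => intro i _; exact Nat.zero_le _
    | succ k ih =>
      intro i hi
      have hk : k < m := by omega
      have hji : (⟨k, hk⟩ : Fin m) < i := by simp [Fin.lt_def, hi]
      have h1 : f ⟨k, hk⟩ < f i := hf hji
      have h2 := ih ⟨k, hk⟩ rfl
      have h3 : (f ⟨k, hk⟩ : ℕ) < (f i : ℕ) := h1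
      omega
  intro i
  exact Fin.le_def.mpr (key (i : ℕ) i rfl)

lemma strictMono_fin_id {m : ℕ} {f : Fin m → Fin m} (hf : StrictMono f) : ∀ i, f i = i := by
  intro i
  have hle : ∀ j : Fin m, j ≤ f j := strictMono_fin_le hf
  have hg : StrictMono (fun j : Fin m => (f j.rev).rev) := by
    intro u v huv
    exact Fin.rev_lt_rev.mpr (hf (Fin.rev_lt_rev.mpr huv))
  have h := strictMono_fin_le hg i.rev
  simp only [Fin.rev_rev] at h
  exact le_antisymm (Fin.rev_le_rev.mp h) (hle i)

lemma turning_points_continuous {l : ℕ} {F : ℝ → ℝ → ℝ} {c : ℝ → Fin l → ℝ} {a b : ℝ}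
    (hfam : C1FamilyOn F a b)
    (hmodal : ∀ γ ∈ Icc a b, IsC1LModal l (F γ) (c γ))
    {γ₀ : ℝ} (hγ₀ : γ₀ ∈ Icc a b) {ε : ℝ} (hε : 0 < ε) :
    ∃ δ > (0:ℝ), ∀ γ ∈ Icc a b, |γ - γ₀| < δ → ∀ i, |c γ i - c γ₀ i| < ε := by
  rcases Nat.eq_zero_or_pos l with hl0 | hlpos
  · subst hl0
    exact ⟨1, one_pos, fun γ _ _ i => i.elim0⟩
  have hne : Nonempty (Fin l) := ⟨⟨0, hlpos⟩⟩
  obtain ⟨⟨hc₀, hc01, _, _, _, s, hsalt, hsmono⟩, hC1, hder⟩ := hmodal γ₀ hγ₀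
  set f₀ := F γ₀ with hf₀
  set c₀ := c γ₀ with hc₀def
  set w := lapPts l c₀ with hw
  -- index shorthands
  set A : Fin l → Fin (l+2) := fun i => i.castSucc.castSucc with hA
  set B : Fin l → Fin (l+2) := fun i => i.castSucc.succ with hB
  set C : Fin l → Fin (l+2) := fun i => i.succ.succ with hC
  have hAval : ∀ i, ((A i : Fin (l+2)) : ℕ) = (i : ℕ) := fun i => rfl
  have hBval : ∀ i, ((B i : Fin (l+2)) : ℕ) = (i : ℕ) + 1 := fun i => rfl
  have hCval : ∀ i, ((C i : Fin (l+2)) : ℕ) = (i : ℕ) + 2 := fun i => rfl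
  have hwAB : ∀ i, w (A i) < w (B i) := fun i => lapPts_lt hc₀ hc01 (by simp only [hAval, hBval]; omega)
  have hwBC : ∀ i, w (B i) < w (C i) := fun i => lapPts_lt hc₀ hc01 (by simp only [hBval, hCval]; omega)
  have hwB : ∀ i, w (B i) = c₀ i := by
    intro i
    rw [hw, lapPts_of_ne c₀ (by simp only [hBval]; omega) (by simp only [hBval]; have := i.isLt; omega)]
    congr 1
  -- test points
  set u : Fin l → ℝ := fun i => max ((2*w (B i) + w (A i))/3) (w (B i) - ε/2) with hu
  set v : Fin l → ℝ := fun i => min ((2*w (B i) + w (C i))/3) (w (B i) + ε/2) with hv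
  have huB : ∀ i, u i < w (B i) := fun i =>
    max_lt (by linarith [hwAB i]) (by linarith)
  have huA : ∀ i, w (A i) < u i := fun i =>
    lt_max_of_lt_left (by linarith [hwAB i])
  have hvB : ∀ i, w (B i) < v i := fun i =>
    lt_min (by linarith [hwBC i]) (by linarith)
  have hvC : ∀ i, v i < w (C i) := fun i =>
    min_lt_of_left_lt (by linarith [hwBC i])
  have huε : ∀ i, w (B i) - ε/2 ≤ u i := fun i => le_max_right _ _
  have hvε : ∀ i, v i ≤ w (B i) + ε/2 := fun i => min_le_right _ _
  have hvu : ∀ i i' : Fin l, i < i' → v i < u i' := by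
    intro i i' hii
    have h1 : v i ≤ (2*w (B i) + w (C i))/3 := min_le_left _ _
    have h2 : (2*w (B i') + w (A i'))/3 ≤ u i' := le_max_left _ _
    have h3 : w (B i) ≤ w (A i') := lapPts_le hc₀ hc01 (by simp only [hBval, hAval]; exact hii)
    have h4 : w (C i) ≤ w (B i') := lapPts_le hc₀ hc01 (by simp only [hCval, hBval]; omega)
    have h5 : w (A i') < w (B i') := hwAB i'
    linarith
  -- u i, v i in [0,1], avoid turning points
  have hw01 : ∀ j, w j ∈ Icc (0:ℝ) 1 := fun j => lapPts_mem hc01 j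
  have hu01 : ∀ i, u i ∈ Icc (0:ℝ) 1 := by
    intro i
    constructor
    · exact le_trans (hw01 (A i)).1 (huA i).le
    · exact le_trans (huB i).le (hw01 (B i)).2
  have hv01 : ∀ i, v i ∈ Icc (0:ℝ) 1 := by
    intro i
    constructor
    · exact le_trans (hw01 (B i)).1 (hvB i).le
    · exact le_trans (hvC i).le (hw01 (C i)).2
  have hwD : ∀ j : Fin l, w j.succ.castSucc = c₀ j := by
    intro j
    rw [hw, lapPts_of_ne c₀ (by simp [Fin.val_succ]) (by simp [Fin.val_succ]; omega)]
    congr 1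
  have hune : ∀ i, ∀ j, u i ≠ c₀ j := by
    intro i j h
    rcases le_or_gt ((j:ℕ)+1) (i:ℕ) with hj | hj
    · have : w j.succ.castSucc ≤ w (A i) := lapPts_le hc₀ hc01 (by simpa [Fin.val_succ])
      rw [hwD j] at this
      linarith [huA i, h ▸ this]
    · have : w (B i) ≤ w j.succ.castSucc := lapPts_le hc₀ hc01 (by
        simp only [hBval, Fin.coe_castSucc, Fin.val_succ]; omega)
      rw [hwD j] at this
      linarith [huB i, h ▸ this]
  have hvne : ∀ i, ∀ j, v i ≠ c₀ j := by
    intro i j h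
    rcases le_or_gt ((j:ℕ)+1) ((i:ℕ)+1) with hj | hj
    · have : w j.succ.castSucc ≤ w (B i) := lapPts_le hc₀ hc01 (by
        simp only [hBval, Fin.coe_castSucc, Fin.val_succ]; omega)
      rw [hwD j] at this
      linarith [hvB i, h ▸ this]
    · have : w (C i) ≤ w j.succ.castSucc := lapPts_le hc₀ hc01 (by
        simp only [hCval, Fin.coe_castSucc, Fin.val_succ]; omega)
      rw [hwD j] at this
      linarith [hvC i, h ▸ this]
  -- derivative signs
  have hdiff : Differentiable ℝ f₀ := hC1.differentiable one_ne_zero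
  have hdune : ∀ i, deriv f₀ (u i) ≠ 0 := fun i => hder (u i) (hu01 i) (hune i)
  have hdvne : ∀ i, deriv f₀ (v i) ≠ 0 := fun i => hder (v i) (hv01 i) (hvne i)
  have hlapu : ∀ i : Fin l, lap l c₀ i.castSucc = Icc (w (A i)) (w (B i)) := fun i => rfl
  have hlapv : ∀ i : Fin l, lap l c₀ i.succ = Icc (w (i.succ.castSucc)) (w (C i)) := fun i => rfl
  have hBB' : ∀ i : Fin l, w (B i) = w (i.succ.castSucc) := by
    intro i; congr 1
  have hsignu : ∀ i : Fin l, if s i.castSucc then 0 < deriv f₀ (u i) else deriv f₀ (u i) < 0 := by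
    intro i
    have hmono := hsmono i.castSucc
    rcases hsb : s i.castSucc with _ | _
    · simp only [hsb, Bool.false_eq_true, if_false] at hmono ⊢
      exact lt_of_le_of_ne (deriv_nonpos_of_strictAntiOn (hdiff _) ⟨huA i, huB i⟩
        (by rw [← hlapu i] at *; exact hmono)) (hdune i)
    · simp only [hsb, if_true] at hmono ⊢
      exact lt_of_le_of_ne (deriv_nonneg_of_strictMonoOn (hdiff _) ⟨huA i, huB i⟩
        (by rw [← hlapu i] at *; exact hmono)) (Ne.symm (hdune i))
  have hsignv : ∀ i : Fin l, if s i.succ then 0 < deriv f₀ (v i) else deriv f₀ (v i) < 0 := by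
    intro i
    have hmono := hsmono i.succ
    have hmem : v i ∈ Ioo (w i.succ.castSucc) (w (C i)) := ⟨(hBB' i) ▸ hvB i, hvC i⟩
    rcases hsb : s i.succ with _ | _
    · simp only [hsb, Bool.false_eq_true, if_false] at hmono ⊢
      exact lt_of_le_of_ne (deriv_nonpos_of_strictAntiOn (hdiff _) hmem
        (by rw [← hlapv i] at *; exact hmono)) (hdvne i)
    · simp only [hsb, if_true] at hmono ⊢
      exact lt_of_le_of_ne (deriv_nonneg_of_strictMonoOn (hdiff _) hmem
        (by rw [← hlapv i] at *; exact hmono)) (Ne.symm (hdvne i))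
  -- opposite signs
  have hopp : ∀ i : Fin l, deriv f₀ (u i) * deriv f₀ (v i) < 0 := by
    intro i
    have h1 := hsignu i
    have h2 := hsignv i
    have h3 := hsalt i
    rcases hsb : s i.castSucc with _ | _
    · rw [hsb] at h1 h3
      rcases hsb' : s i.succ with _ | _
      · rw [hsb'] at h3; simp at h3
      · rw [hsb'] at h2; simp only [if_false, if_true] at h1 h2
        exact mul_neg_of_neg_of_pos h1 h2
    · rw [hsb] at h1 h3
      rcases hsb' : s i.succ with _ | _
      · rw [hsb'] at h2; simp only [if_true, if_false] at h1 h2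
        exact mul_neg_of_pos_of_neg h1 h2
      · rw [hsb'] at h3; simp at h3
  -- the uniform lower bound on |deriv| at test points
  set ρ : ℝ := Finset.univ.inf' Finset.univ_nonempty
    (fun i : Fin l => min |deriv f₀ (u i)| |deriv f₀ (v i)|) with hρ
  have hρpos : 0 < ρ := by
    rw [hρ, Finset.lt_inf'_iff]
    intro i _
    exact lt_min (abs_pos.mpr (hdune i)) (abs_pos.mpr (hdvne i))
  have hρu : ∀ i, ρ ≤ |deriv f₀ (u i)| := fun i =>
    le_trans (Finset.inf'_le _ (Finset.mem_univ i)) (min_le_left _ _)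
  have hρv : ∀ i, ρ ≤ |deriv f₀ (v i)| := fun i =>
    le_trans (Finset.inf'_le _ (Finset.mem_univ i)) (min_le_right _ _)
  obtain ⟨δ, hδpos, hδ⟩ := hfam γ₀ hγ₀ ρ hρpos
  refine ⟨δ, hδpos, fun γ hγ hγd i => ?_⟩
  -- for each i, find a turning point of γ in [u i, v i]
  obtain ⟨⟨hcγ, hcγ01, _, _, _, sγ, hsaltγ, hsmonγ⟩, hC1γ, hderγ⟩ := hmodal γ hγ
  have hcontd : Continuous (deriv (F γ)) := hC1γ.continuous_deriv le_rfl
  have hkey : ∀ i : Fin l, ∃ j : Fin l, c γ j ∈ Icc (u i) (v i) := by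
    intro i
    have hgu := (hδ γ hγ hγd (u i) (hu01 i)).2
    have hgv := (hδ γ hγ hγd (v i) (hv01 i)).2
    have huv : u i ≤ v i := le_trans (huB i).le (hvB i).le
    have hzero : ∃ z ∈ Icc (u i) (v i), deriv (F γ) z = 0 := by
      have hopp' := hopp i
      rcases lt_or_gt_of_ne (hdune i) with hneg | hpos
      · -- deriv f₀ (u i) < 0, so deriv f₀ (v i) > 0
        have hvpos : 0 < deriv f₀ (v i) := by
          rcases lt_or_gt_of_ne (hdvne i) with h | h
          · nlinarith
          · exact h
        have h1 : deriv (F γ) (u i) < 0 := by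
          have := abs_lt.mp hgu
          have := hρu i
          rw [abs_of_nonpos hneg.le] at this
          linarith [this]
        have h2 : 0 < deriv (F γ) (v i) := by
          have := abs_lt.mp hgv
          have := hρv i
          rw [abs_of_pos hvpos] at this
          linarith [this]
        have := intermediate_value_Icc huv hcontd.continuousOn
        obtain ⟨z, hz, hz0⟩ := this ⟨h1.le, h2.le⟩
        exact ⟨z, hz, hz0⟩
      · have hvneg : deriv f₀ (v i) < 0 := by
          rcases lt_or_gt_of_ne (hdvne i) with h | h
          · exact h
          · nlinarith
        have h1 : 0 < deriv (F γ) (u i) := by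
          have := abs_lt.mp hgu
          have := hρu i
          rw [abs_of_pos hpos] at this
          linarith [this]
        have h2 : deriv (F γ) (v i) < 0 := by
          have := abs_lt.mp hgv
          have := hρv i
          rw [abs_of_nonpos hvneg.le] at this
          linarith [this]
        have := intermediate_value_Icc' huv hcontd.continuousOn
        obtain ⟨z, hz, hz0⟩ := this ⟨h2.le, h1.le⟩
        exact ⟨z, hz, hz0⟩
    obtain ⟨z, hz, hz0⟩ := hzero
    have hz01 : z ∈ Icc (0:ℝ) 1 := ⟨le_trans (hu01 i).1 hz.1, le_trans hz.2 (hv01 i).2⟩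
    by_contra hno
    push_neg at hno
    have : ∀ j, z ≠ c γ j := by
      intro j h
      exact hno j (h ▸ hz)
    exact hderγ z hz01 this hz0
  choose j hj using hkey
  have hjmono : StrictMono j := by
    intro i i' hii
    have h1 : c γ (j i) ≤ v i := (hj i).2
    have h2 : u i' ≤ c γ (j i') := (hj i').1
    have := hvu i i' hii
    exact (hcγ.lt_iff_lt).mp (by linarith)
  have hjid : ∀ i, j i = i := strictMono_fin_id hjmono
  have := hj i
  rw [hjid i] at this
  have h1 := le_trans (huε i) this.1
  have h2 := le_trans this.2 (hvε i)
  rw [abs_lt]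
  constructor
  · rw [hwB i] at h1; linarith
  · rw [hwB i] at h2; linarith

lemma iterate_boundary {f : ℝ → ℝ} (h0 : f 0 ∈ ({0, 1} : Set ℝ))
    (h1 : f 1 ∈ ({0, 1} : Set ℝ)) :
    ∀ m, ∀ x ∈ ({0, 1} : Set ℝ), f^[m] x ∈ ({0, 1} : Set ℝ) := by
  intro m
  induction m with
  | zero => intro x hx; simpa using hx
  | succ m ih =>
    intro x hx
    rw [Function.iterate_succ_apply]
    rcases hx with rfl | rfl
    · exact ih _ h0
    · exact ih _ (by simpa using h1)

lemma pullback_iterate_mem_Ioo {l n : ℕ} {F : ℝ → ℝ → ℝ} {c : ℝ → Fin l → ℝ}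
    {y : ℝ → ℝ} {S : Fin n → Fin (l+1)} {γ x : ℝ}
    (hpb : PullbackOfType l F c y n S γ x)
    (h0 : F γ 0 ∈ ({0, 1} : Set ℝ)) (h1 : F γ 1 ∈ ({0, 1} : Set ℝ))
    (hyγ : y γ ∈ Ioo (0:ℝ) 1) :
    ∀ k : Fin n, (F γ)^[(k:ℕ)] x
      ∈ Ioo (lapPts l (c γ) (S k).castSucc) (lapPts l (c γ) (S k).succ) := by
  intro k
  have hb : (F γ)^[(k:ℕ)] x ∉ ({0, 1} : Set ℝ) := by
    intro hmem
    have hkn : (k:ℕ) ≤ n := k.isLt.le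
    have : (F γ)^[n] x ∈ ({0, 1} : Set ℝ) := by
      have : (F γ)^[n - (k:ℕ) + (k:ℕ)] x ∈ ({0, 1} : Set ℝ) := by
        rw [Function.iterate_add_apply]
        exact iterate_boundary h0 h1 _ _ hmem
      rwa [Nat.sub_add_cancel hkn] at this
    rw [hpb.1] at this
    rcases this with h | h
    · exact absurd (h ▸ hyγ).1 (lt_irrefl _)
    · exact absurd ((mem_singleton_iff.mp h) ▸ hyγ).2 (lt_irrefl _)
  rcases hpb.2 k with (h | h) | h
  · exact h
  · split_ifs at h with hc
    · exact absurd (Or.inl h) hb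
    · exact absurd h (Set.notMem_empty _)
  · split_ifs at h with hc
    · exact absurd (Or.inr h) hb
    · exact absurd h (Set.notMem_empty _)

lemma lapPts_close {l : ℕ} {c₁ c₂ : Fin l → ℝ} {e : ℝ} (he : 0 ≤ e)
    (h : ∀ i, |c₁ i - c₂ i| ≤ e) (j : Fin (l+2)) :
    |lapPts l c₁ j - lapPts l c₂ j| ≤ e := by
  unfold lapPts
  split_ifs with h0 hl
  · simpa using he
  · simpa using he
  · exact h _

lemma exists_pos_forall_fin {m : ℕ} (P : Fin m → ℝ → Prop)
    (hmono : ∀ i δ δ', 0 < δ' → δ' ≤ δ → P i δ → P i δ')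
    (h : ∀ i, ∃ δ > 0, P i δ) : ∃ δ > 0, ∀ i, P i δ := by
  induction m with
  | zero => exact ⟨1, one_pos, fun i => i.elim0⟩
  | succ m ih =>
    obtain ⟨δ₁, hδ₁, h₁⟩ := ih (fun i => P i.castSucc)
      (fun i δ δ' h0 hle hp => hmono i.castSucc δ δ' h0 hle hp) (fun i => h i.castSucc)
    obtain ⟨δ₂, hδ₂, h₂⟩ := h (Fin.last m)
    refine ⟨min δ₁ δ₂, lt_min hδ₁ hδ₂, fun i => ?_⟩
    induction i using Fin.lastCases with
    | last => exact hmono _ _ _ (lt_min hδ₁ hδ₂) (min_le_right _ _) h₂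
    | cast j => exact hmono _ _ _ (lt_min hδ₁ hδ₂) (min_le_left _ _) (h₁ j)

lemma joint_iterate {F : ℝ → ℝ → ℝ} {a b : ℝ} (hfam : C1FamilyOn F a b)
    (hcont : ∀ γ ∈ Icc a b, Continuous (F γ))
    (hmaps : ∀ γ ∈ Icc a b, MapsTo (F γ) (Icc 0 1) (Icc 0 1))
    {γ₀ : ℝ} (hγ₀ : γ₀ ∈ Icc a b) (m : ℕ) :
    ∀ η > (0:ℝ), ∃ δ > (0:ℝ), ∃ θ > (0:ℝ), ∀ γ ∈ Icc a b, |γ - γ₀| < δ →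
      ∀ x ∈ Icc (0:ℝ) 1, ∀ x₀ ∈ Icc (0:ℝ) 1, |x - x₀| < θ →
        |(F γ)^[m] x - (F γ₀)^[m] x₀| < η := by
  induction m with
  | zero =>
    intro η hη
    exact ⟨1, one_pos, η, hη, fun γ _ _ x _ x₀ _ h => by simpa using h⟩
  | succ m ih =>
    intro η hη
    -- uniform continuity of F γ₀ on [0,1]
    have hu : UniformContinuousOn (F γ₀) (Icc 0 1) :=
      isCompact_Icc.uniformContinuousOn_of_continuous ((hcont γ₀ hγ₀).continuousOn)
    rw [Metric.uniformContinuousOn_iff] at hu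
    obtain ⟨θ'', hθ''pos, hθ''⟩ := hu (η/2) (by linarith)
    obtain ⟨δ₁, hδ₁pos, hδ₁⟩ := hfam γ₀ hγ₀ (η/2) (by linarith)
    obtain ⟨δ₂, hδ₂pos, θ, hθpos, hIH⟩ := ih θ'' hθ''pos
    refine ⟨min δ₁ δ₂, lt_min hδ₁pos hδ₂pos, θ, hθpos, fun γ hγ hγd x hx x₀ hx₀ hxx => ?_⟩
    have hu1 : (F γ)^[m] x ∈ Icc (0:ℝ) 1 := (hmaps γ hγ).iterate m hx
    have hu0 : (F γ₀)^[m] x₀ ∈ Icc (0:ℝ) 1 := (hmaps γ₀ hγ₀).iterate m hx₀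
    have h1 : |(F γ)^[m] x - (F γ₀)^[m] x₀| < θ'' :=
      hIH γ hγ (hγd.trans_le (min_le_right _ _)) x hx x₀ hx₀ hxx
    have h2 : |F γ₀ ((F γ)^[m] x) - F γ₀ ((F γ₀)^[m] x₀)| < η/2 := by
      have := hθ'' _ hu1 _ hu0 (by rwa [Real.dist_eq])
      rwa [Real.dist_eq] at this
    have h3 : |F γ ((F γ)^[m] x) - F γ₀ ((F γ)^[m] x)| < η/2 :=
      (hδ₁ γ hγ (hγd.trans_le (min_le_left _ _)) _ hu1).1
    rw [Function.iterate_succ_apply', Function.iterate_succ_apply']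
    calc |F γ ((F γ)^[m] x) - F γ₀ ((F γ₀)^[m] x₀)|
        ≤ |F γ ((F γ)^[m] x) - F γ₀ ((F γ)^[m] x)|
          + |F γ₀ ((F γ)^[m] x) - F γ₀ ((F γ₀)^[m] x₀)| := abs_sub_le _ _ _
      _ < η/2 + η/2 := add_lt_add h3 h2
      _ = η := by ring

set_option maxHeartbeats 1000000 in

lemma local_pullback {l n : ℕ} (hn : 1 ≤ n) {F : ℝ → ℝ → ℝ} {c : ℝ → Fin l → ℝ} {a b : ℝ}
    {y : ℝ → ℝ} {S : Fin n → Fin (l+1)}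
    (hfam : C1FamilyOn F a b)
    (hmodal : ∀ γ ∈ Icc a b, IsC1LModal l (F γ) (c γ))
    (hy : ContinuousOn y (Icc a b))
    (hyint : ∀ γ ∈ Icc a b, y γ ∈ Ioo (0:ℝ) 1)
    {γ₀ : ℝ} (hγ₀ : γ₀ ∈ Icc a b) {x₀ : ℝ}
    (hx₀ : PullbackOfType l F c y n S γ₀ x₀)
    {ε : ℝ} (hε : 0 < ε) :
    ∃ δ > (0:ℝ), ∀ γ ∈ Icc a b, |γ - γ₀| < δ →
      ∃ x, PullbackOfType l F c y n S γ x ∧ |x - x₀| ≤ ε := by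
  obtain ⟨⟨hc₀, hc01, hmaps₀, hb0, hb1, s, hsalt, hsmono⟩, hC1, -⟩ := hmodal γ₀ hγ₀
  have hcont : ∀ γ ∈ Icc a b, Continuous (F γ) := fun γ hγ =>
    ((hmodal γ hγ).2.1).continuous
  have hmaps : ∀ γ ∈ Icc a b, MapsTo (F γ) (Icc 0 1) (Icc 0 1) := fun γ hγ =>
    (hmodal γ hγ).1.2.2.1
  set p : ℕ → ℝ := fun k => (F γ₀)^[k] x₀ with hp
  have hpIoo := pullback_iterate_mem_Ioo hx₀ hb0 hb1 (hyint γ₀ hγ₀)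
  haveI : Nonempty (Fin n) := ⟨⟨0, hn⟩⟩
  set wL : Fin n → ℝ := fun k => lapPts l (c γ₀) (S k).castSucc with hwL
  set wR : Fin n → ℝ := fun k => lapPts l (c γ₀) (S k).succ with hwR
  set η : ℝ := (Finset.univ.inf' Finset.univ_nonempty
    (fun k : Fin n => min (p k - wL k) (wR k - p k))) / 2 with hη
  have hηpos : 0 < η := by
    rw [hη]
    apply div_pos _ two_pos
    rw [Finset.lt_inf'_iff]
    intro k _
    exact lt_min (by linarith [(hpIoo k).1]) (by linarith [(hpIoo k).2])
  have hηk : ∀ k : Fin n, wL k ≤ p k - 2*η ∧ p k + 2*η ≤ wR k := by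
    intro k
    have h1 : Finset.univ.inf' Finset.univ_nonempty
        (fun k : Fin n => min (p k - wL k) (wR k - p k)) ≤ min (p k - wL k) (wR k - p k) :=
      Finset.inf'_le _ (Finset.mem_univ k)
    have h2 := min_le_left (p k - wL k) (wR k - p k)
    have h3 := min_le_right (p k - wL k) (wR k - p k)
    constructor <;> [skip; skip] <;> rw [hη] <;> linarith
  set k0 : Fin n := ⟨0, hn⟩ with hk0
  have hp0 : p (k0:ℕ) = x₀ := rfl
  have hwL0 : (0:ℝ) ≤ wL k0 := (lapPts_mem hc01 _).1
  have hwR0 : wR k0 ≤ 1 := (lapPts_mem hc01 _).2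
  have hx01 : x₀ ∈ Icc (0:ℝ) 1 := by
    have := hηk k0
    rw [hp0] at this
    exact ⟨by linarith [this.1], by linarith [this.2]⟩
  -- combined joint continuity over all iterates up to n
  have hJOINT : ∀ η' > (0:ℝ), ∃ Θ > (0:ℝ), ∀ k : Fin (n+1), ∀ γ ∈ Icc a b,
      |γ - γ₀| < Θ → ∀ x ∈ Icc (0:ℝ) 1, ∀ x' ∈ Icc (0:ℝ) 1, |x - x'| < Θ →
      |(F γ)^[(k:ℕ)] x - (F γ₀)^[(k:ℕ)] x'| < η' := by
    intro η' hη'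
    obtain ⟨Θ, hΘpos, hΘ⟩ := exists_pos_forall_fin
      (fun (k : Fin (n+1)) (r : ℝ) => ∀ γ ∈ Icc a b, |γ - γ₀| < r →
        ∀ x ∈ Icc (0:ℝ) 1, ∀ x' ∈ Icc (0:ℝ) 1, |x - x'| < r →
        |(F γ)^[(k:ℕ)] x - (F γ₀)^[(k:ℕ)] x'| < η')
      (fun i δ δ' _ hle hP γ hγ hγd x hx x' hx' hxx =>
        hP γ hγ (hγd.trans_le hle) x hx x' hx' (hxx.trans_le hle))
      (fun k => by
        obtain ⟨δ, hδpos, θ, hθpos, hj⟩ := joint_iterate hfam hcont hmaps hγ₀ (k:ℕ) η' hη'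
        exact ⟨min δ θ, lt_min hδpos hθpos, fun γ hγ hγd x hx x' hx' hxx =>
          hj γ hγ (hγd.trans_le (min_le_left _ _)) x hx x' hx'
            (hxx.trans_le (min_le_right _ _))⟩)
    exact ⟨Θ, hΘpos, hΘ⟩
  obtain ⟨Θ₁, hΘ₁pos, hΘ₁⟩ := hJOINT (η/2) (by linarith)
  set ε₁ : ℝ := min (min ε η) (Θ₁/2) with hε₁
  have hε₁pos : 0 < ε₁ := lt_min (lt_min hε hηpos) (by linarith)
  have hε₁ε : ε₁ ≤ ε := le_trans (min_le_left _ _) (min_le_left _ _)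
  have hε₁η : ε₁ ≤ η := le_trans (min_le_left _ _) (min_le_right _ _)
  have hε₁Θ : ε₁ < Θ₁ := lt_of_le_of_lt (min_le_right _ _) (by linarith)
  set J : Set ℝ := Icc (x₀ - ε₁) (x₀ + ε₁) with hJ
  have hJ01 : J ⊆ Icc (0:ℝ) 1 := by
    intro x hx
    have h := hηk k0
    rw [hp0] at h
    exact ⟨by linarith [hx.1, h.1], by linarith [hx.2, h.2]⟩
  have hx₀J : x₀ ∈ J := ⟨by linarith, by linarith⟩
  have hJclose : ∀ x ∈ J, ∀ k : Fin (n+1), |(F γ₀)^[(k:ℕ)] x - (F γ₀)^[(k:ℕ)] x₀| < η/2 := by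
    intro x hx k
    exact hΘ₁ k γ₀ hγ₀ (by simpa using hΘ₁pos) x (hJ01 hx) x₀ hx01
      (by rw [abs_sub_comm] at *; exact lt_of_le_of_lt (abs_le.mpr ⟨by linarith [hx.2], by linarith [hx.1]⟩) hε₁Θ)
  have hJlap : ∀ x ∈ J, ∀ k : Fin n, (F γ₀)^[(k:ℕ)] x ∈ lap l (c γ₀) (S k) := by
    intro x hx k
    have h1 := hJclose x hx k.castSucc
    have h2 := hηk k
    have hcast : ((k.castSucc : Fin (n+1)) : ℕ) = (k : ℕ) := rfl
    rw [hcast] at h1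
    have := abs_lt.mp h1
    exact ⟨by linarith [h2.1, this.1], by linarith [h2.2, this.2]⟩
  -- strict monotonicity of the n-th iterate on J
  have hQ : ∀ k : ℕ, k ≤ n → StrictMonoOn ((F γ₀)^[k]) J ∨ StrictAntiOn ((F γ₀)^[k]) J := by
    intro k
    induction k with
    | zero =>
      intro _
      left
      simp only [Function.iterate_zero]
      exact fun x _ y _ h => h
    | succ k ih =>
      intro hk1
      have hk : k ≤ n := by omega
      set kF : Fin n := ⟨k, by omega⟩ with hkF
      have hmapsk : MapsTo ((F γ₀)^[k]) J (lap l (c γ₀) (S kF)) := fun x hx =>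
        hJlap x hx kF
      have hmono := hsmono (S kF)
      rw [Function.iterate_succ']
      rcases ih hk with hm | hm <;> rcases hsb : s (S kF) with _ | _
      · simp only [hsb, Bool.false_eq_true, if_false] at hmono
        exact Or.inr (hmono.comp_strictMonoOn hm hmapsk)
      · simp only [hsb, if_true] at hmono
        exact Or.inl (hmono.comp hm hmapsk)
      · simp only [hsb, Bool.false_eq_true, if_false] at hmono
        exact Or.inl (hmono.comp hm hmapsk)
      · simp only [hsb, if_true] at hmono
        exact Or.inr (hmono.comp_strictAntiOn hm hmapsk)
  set eL : ℝ := x₀ - ε₁ with heL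
  set eR : ℝ := x₀ + ε₁ with heR
  have heLJ : eL ∈ J := ⟨le_refl _, by linarith⟩
  have heRJ : eR ∈ J := ⟨by linarith, le_refl _⟩
  set A : ℝ := (F γ₀)^[n] eL with hA
  set Bv : ℝ := (F γ₀)^[n] eR with hBv
  have hfx₀ : (F γ₀)^[n] x₀ = y γ₀ := hx₀.1
  have hstrad : (A < y γ₀ ∧ y γ₀ < Bv) ∨ (Bv < y γ₀ ∧ y γ₀ < A) := by
    rcases hQ n le_rfl with hm | hm
    · left
      constructor
      · rw [← hfx₀]; exact hm heLJ hx₀J (by rw [heL]; linarith)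
      · rw [← hfx₀]; exact hm hx₀J heRJ (by rw [heR]; linarith)
    · right
      constructor
      · rw [← hfx₀]; exact hm hx₀J heRJ (by rw [heR]; linarith)
      · rw [← hfx₀]; exact hm heLJ hx₀J (by rw [heL]; linarith)
  set ρ : ℝ := min |A - y γ₀| |Bv - y γ₀| / 2 with hρ
  have hρpos : 0 < ρ := by
    apply div_pos _ two_pos
    rcases hstrad with ⟨h1, h2⟩ | ⟨h1, h2⟩ <;>
      exact lt_min (abs_pos.mpr (by linarith)) (abs_pos.mpr (by linarith))
  have hρA : 2*ρ ≤ |A - y γ₀| := by rw [hρ]; have := min_le_left |A - y γ₀| |Bv - y γ₀|; linarith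
  have hρB : 2*ρ ≤ |Bv - y γ₀| := by rw [hρ]; have := min_le_right |A - y γ₀| |Bv - y γ₀|; linarith
  set η'' : ℝ := min (η/2) ρ with hη''
  have hη''pos : 0 < η'' := lt_min (by linarith) hρpos
  obtain ⟨Θ₂, hΘ₂pos, hΘ₂⟩ := hJOINT η'' hη''pos
  obtain ⟨δy, hδypos, hδy⟩ := Metric.continuousWithinAt_iff.mp (hy γ₀ hγ₀) ρ hρpos
  obtain ⟨δc, hδcpos, hδc⟩ := turning_points_continuous hfam hmodal hγ₀ (by linarith : (0:ℝ) < η/2)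
  refine ⟨min (min δy Θ₂) δc, lt_min (lt_min hδypos hΘ₂pos) hδcpos, fun γ hγ hγd => ?_⟩
  have hγdy : |γ - γ₀| < δy := lt_of_lt_of_le hγd (le_trans (min_le_left _ _) (min_le_left _ _))
  have hγdΘ : |γ - γ₀| < Θ₂ := lt_of_lt_of_le hγd (le_trans (min_le_left _ _) (min_le_right _ _))
  have hγdc : |γ - γ₀| < δc := lt_of_lt_of_le hγd (min_le_right _ _)
  have hyd : |y γ - y γ₀| < ρ := by
    have := hδy hγ (by rwa [Real.dist_eq])
    rwa [Real.dist_eq] at this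
  have hlast : ((Fin.last n : Fin (n+1)) : ℕ) = n := rfl
  have hAd : |(F γ)^[n] eL - A| < η'' := by
    have := hΘ₂ (Fin.last n) γ hγ hγdΘ eL (hJ01 heLJ) eL (hJ01 heLJ) (by simpa using hΘ₂pos)
    rwa [hlast] at this
  have hBd : |(F γ)^[n] eR - Bv| < η'' := by
    have := hΘ₂ (Fin.last n) γ hγ hγdΘ eR (hJ01 heRJ) eR (hJ01 heRJ) (by simpa using hΘ₂pos)
    rwa [hlast] at this
  have hcγ : Continuous (F γ) := hcont γ hγ
  have hη''ρ : η'' ≤ ρ := min_le_right _ _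
  -- find the pullback by the intermediate value theorem
  have hEx : ∃ x ∈ J, (F γ)^[n] x = y γ := by
    rcases hstrad with ⟨h1, h2⟩ | ⟨h1, h2⟩
    · have hAy : 2*ρ ≤ y γ₀ - A := by rwa [abs_of_neg (by linarith : A - y γ₀ < 0), neg_sub] at hρA
      have hBy : 2*ρ ≤ Bv - y γ₀ := by rwa [abs_of_pos (by linarith : 0 < Bv - y γ₀)] at hρB
      have hL : (F γ)^[n] eL ≤ y γ := by
        have := abs_lt.mp hAd
        have := abs_lt.mp hyd
        nlinarith [hη''ρ]
      have hR : y γ ≤ (F γ)^[n] eR := by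
        have := abs_lt.mp hBd
        have := abs_lt.mp hyd
        nlinarith [hη''ρ]
      have := intermediate_value_Icc (by rw [heL, heR]; linarith : eL ≤ eR)
        (hcγ.iterate n).continuousOn
      obtain ⟨x, hxJ, hgx⟩ := this ⟨hL, hR⟩
      exact ⟨x, hxJ, hgx⟩
    · have hAy : 2*ρ ≤ A - y γ₀ := by rwa [abs_of_pos (by linarith : 0 < A - y γ₀)] at hρA
      have hBy : 2*ρ ≤ y γ₀ - Bv := by rwa [abs_of_neg (by linarith : Bv - y γ₀ < 0), neg_sub] at hρB
      have hL : y γ ≤ (F γ)^[n] eL := by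
        have := abs_lt.mp hAd
        have := abs_lt.mp hyd
        nlinarith [hη''ρ]
      have hR : (F γ)^[n] eR ≤ y γ := by
        have := abs_lt.mp hBd
        have := abs_lt.mp hyd
        nlinarith [hη''ρ]
      have := intermediate_value_Icc' (by rw [heL, heR]; linarith : eL ≤ eR)
        (hcγ.iterate n).continuousOn
      obtain ⟨x, hxJ, hgx⟩ := this ⟨hR, hL⟩
      exact ⟨x, hxJ, hgx⟩
  obtain ⟨x, hxJ, hgx⟩ := hEx
  have hx01' : x ∈ Icc (0:ℝ) 1 := hJ01 hxJ
  refine ⟨x, ⟨hgx, fun k => ?_⟩, ?_⟩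
  · -- lap membership
    have h1 : |(F γ)^[(k:ℕ)] x - (F γ₀)^[(k:ℕ)] x| < η'' := by
      have := hΘ₂ k.castSucc γ hγ hγdΘ x hx01' x hx01' (by simpa using hΘ₂pos)
      exact this
    have h2 := hJclose x hxJ k.castSucc
    have hcast : ((k.castSucc : Fin (n+1)) : ℕ) = (k : ℕ) := rfl
    rw [hcast] at h2
    have h3 : |(F γ)^[(k:ℕ)] x - p (k:ℕ)| < η := by
      have e1 := abs_lt.mp h1
      have e2 := abs_lt.mp h2
      have := min_le_left (η/2) ρ
      rw [abs_lt]
      constructor <;> [skip; skip] <;> rw [hp] <;> simp only <;> nlinarith [hη''ρ]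
    have hcc : ∀ i, |c γ i - c γ₀ i| ≤ η/2 := fun i => (hδc γ hγ hγdc i).le
    have hwLc := lapPts_close (by linarith : (0:ℝ) ≤ η/2) hcc (S k).castSucc
    have hwRc := lapPts_close (by linarith : (0:ℝ) ≤ η/2) hcc (S k).succ
    have hk2 := hηk k
    have e3 := abs_lt.mp h3
    have e4 := abs_le.mp hwLc
    have e5 := abs_le.mp hwRc
    apply Ioo_subset_openLap
    constructor
    · have hthis : lapPts l (c γ) (S k).castSucc ≤ wL k + η/2 := by
        have : wL k = lapPts l (c γ₀) (S k).castSucc := rfl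
        rw [this]; linarith [e4.1, e4.2]
      linarith [hk2.1, e3.1]
    · have hthis : wR k - η/2 ≤ lapPts l (c γ) (S k).succ := by
        have : wR k = lapPts l (c γ₀) (S k).succ := rfl
        rw [this]; linarith [e5.1, e5.2]
      linarith [hk2.2, e3.2]
  · have h1 : eL ≤ x := hxJ.1
    have h2 : x ≤ eR := hxJ.2
    rw [heL] at h1
    rw [heR] at h2
    have h : |x - x₀| ≤ ε₁ := abs_le.mpr ⟨by linarith, by linarith⟩
    exact h.trans hε₁ε

lemma iter_injOn {f : ℝ → ℝ} {l : ℕ} {c : Fin l → ℝ}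
    (hinj : ∀ j : Fin (l+1), InjOn f (lap l c j)) :
    ∀ (n : ℕ) (T : ℕ → Fin (l+1)) (x₁ x₂ : ℝ),
      (∀ k < n, f^[k] x₁ ∈ lap l c (T k)) → (∀ k < n, f^[k] x₂ ∈ lap l c (T k)) →
      f^[n] x₁ = f^[n] x₂ → x₁ = x₂ := by
  intro n
  induction n with
  | zero => intro T x₁ x₂ _ _ h; simpa using h
  | succ m ih =>
    intro T x₁ x₂ h₁ h₂ h
    have hf : f x₁ = f x₂ := by
      refine ih (fun k => T (k+1)) (f x₁) (f x₂) ?_ ?_ ?_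
      · intro k hk; rw [← Function.iterate_succ_apply]; exact h₁ (k+1) (by omega)
      · intro k hk; rw [← Function.iterate_succ_apply]; exact h₂ (k+1) (by omega)
      · rw [← Function.iterate_succ_apply, ← Function.iterate_succ_apply]; exact h
    exact hinj (T 0) (by simpa using h₁ 0 (by omega)) (by simpa using h₂ 0 (by omega)) hf

lemma pullback_unique {l n : ℕ} {F : ℝ → ℝ → ℝ} {c : ℝ → Fin l → ℝ} {a b : ℝ}
    {y : ℝ → ℝ} {S : Fin n → Fin (l+1)}
    (hmodal : ∀ γ ∈ Icc a b, IsC1LModal l (F γ) (c γ))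
    {γ : ℝ} (hγ : γ ∈ Icc a b) {x₁ x₂ : ℝ}
    (h₁ : PullbackOfType l F c y n S γ x₁) (h₂ : PullbackOfType l F c y n S γ x₂) :
    x₁ = x₂ := by
  obtain ⟨⟨hc, hc01, -, -, -, s, -, hsmono⟩, -, -⟩ := hmodal γ hγ
  have hinj : ∀ j : Fin (l+1), InjOn (F γ) (lap l (c γ) j) := by
    intro j
    have := hsmono j
    rcases hsb : s j with _ | _
    · simp only [hsb, Bool.false_eq_true, if_false] at this
      exact this.injOn
    · simp only [hsb, if_true] at this
      exact this.injOn
  classical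
  set T : ℕ → Fin (l+1) := fun k => if h : k < n then S ⟨k, h⟩ else ⟨0, Nat.succ_pos l⟩ with hT
  refine iter_injOn hinj n T x₁ x₂ ?_ ?_ ?_
  · intro k hk
    have := openLap_subset_lap hc01 (S ⟨k, hk⟩) (h₁.2 ⟨k, hk⟩)
    rw [hT]
    simpa [dif_pos hk] using this
  · intro k hk
    have := openLap_subset_lap hc01 (S ⟨k, hk⟩) (h₂.2 ⟨k, hk⟩)
    rw [hT]
    simpa [dif_pos hk] using this
  · rw [h₁.1, h₂.1]

theorem pullback_of_type_unique_open_continuous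
    (l n : ℕ) (hn : 1 ≤ n) (F : ℝ → ℝ → ℝ) (c : ℝ → Fin l → ℝ) (a b : ℝ)
    (y : ℝ → ℝ) (S : Fin n → Fin (l + 1))
    (hfam : C1FamilyOn F a b)
    (hmodal : ∀ γ ∈ Icc a b, IsC1LModal l (F γ) (c γ))
    (hy : ContinuousOn y (Icc a b))
    (hyint : ∀ γ ∈ Icc a b, y γ ∈ Ioo (0:ℝ) 1) :
    -- (i) uniqueness
    (∀ γ ∈ Icc a b, ∀ x₁ x₂ : ℝ,
      PullbackOfType l F c y n S γ x₁ → PullbackOfType l F c y n S γ x₂ → x₁ = x₂) ∧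
    -- (ii) the domain of definition is open in [a,b], and (iii) the pullback is
    -- continuous there
    ∃ U : Set ℝ, IsOpen U ∧
      {γ | γ ∈ Icc a b ∧ ∃ x, PullbackOfType l F c y n S γ x} = U ∩ Icc a b ∧
      ∃ xf : ℝ → ℝ, ContinuousOn xf (U ∩ Icc a b) ∧
        ∀ γ ∈ U ∩ Icc a b, PullbackOfType l F c y n S γ (xf γ) := by
  classical
  have huniq : ∀ γ ∈ Icc a b, ∀ x₁ x₂ : ℝ,
      PullbackOfType l F c y n S γ x₁ → PullbackOfType l F c y n S γ x₂ → x₁ = x₂ :=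
    fun γ hγ x₁ x₂ h₁ h₂ => pullback_unique hmodal hγ h₁ h₂
  refine ⟨huniq, ?_⟩
  set D : Set ℝ := {γ | γ ∈ Icc a b ∧ ∃ x, PullbackOfType l F c y n S γ x} with hD
  have hδf : ∀ γ₀ : ℝ, ∃ δ : ℝ, 0 < δ ∧ (γ₀ ∈ D → ∀ γ ∈ Icc a b, |γ - γ₀| < δ →
      ∃ x, PullbackOfType l F c y n S γ x) := by
    intro γ₀
    by_cases h : γ₀ ∈ D
    · obtain ⟨hγ₀, x₀, hx₀⟩ := h
      obtain ⟨δ, hδpos, hδ⟩ := local_pullback hn hfam hmodal hy hyint hγ₀ hx₀ one_pos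
      exact ⟨δ, hδpos, fun _ γ hγ hγd => ⟨(hδ γ hγ hγd).choose, (hδ γ hγ hγd).choose_spec.1⟩⟩
    · exact ⟨1, one_pos, fun h' => absurd h' h⟩
  choose δf hδfpos hδf using hδf
  set U : Set ℝ := ⋃ γ₀ ∈ D, ball γ₀ (δf γ₀) with hU
  have hUopen : IsOpen U := isOpen_biUnion (fun γ₀ _ => isOpen_ball)
  have hDU : D = U ∩ Icc a b := by
    apply Set.Subset.antisymm
    · intro γ hγ
      exact ⟨mem_biUnion hγ (mem_ball_self (hδfpos γ)), hγ.1⟩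
    · rintro γ ⟨hγU, hγI⟩
      obtain ⟨γ₀, hγ₀D, hγball⟩ := mem_iUnion₂.mp hγU
      have : |γ - γ₀| < δf γ₀ := by rwa [mem_ball, Real.dist_eq] at hγball
      exact ⟨hγI, hδf γ₀ hγ₀D γ hγI this⟩
  set xf : ℝ → ℝ := fun γ =>
    if h : ∃ x, PullbackOfType l F c y n S γ x then h.choose else 0 with hxf
  have hxfpb : ∀ γ ∈ D, PullbackOfType l F c y n S γ (xf γ) := by
    rintro γ ⟨hγI, hex⟩
    rw [hxf]
    simp only [dif_pos hex]
    exact hex.choose_spec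
  refine ⟨U, hUopen, hDU, xf, ?_, fun γ hγ => hxfpb γ (hDU ▸ hγ)⟩
  intro γ₀ hγ₀
  have hγ₀D : γ₀ ∈ D := hDU ▸ hγ₀
  have hγ₀I : γ₀ ∈ Icc a b := hγ₀D.1
  have hx₀pb : PullbackOfType l F c y n S γ₀ (xf γ₀) := hxfpb γ₀ hγ₀D
  rw [Metric.continuousWithinAt_iff]
  intro ε hε
  obtain ⟨δ, hδpos, hδ⟩ := local_pullback hn hfam hmodal hy hyint hγ₀I hx₀pb
    (by linarith : (0:ℝ) < ε/2)
  refine ⟨δ, hδpos, fun γ hγ hγd => ?_⟩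
  have hγD : γ ∈ D := hDU ▸ hγ
  have hγI : γ ∈ Icc a b := hγD.1
  obtain ⟨x, hxpb, hxd⟩ := hδ γ hγI (by rwa [Real.dist_eq] at hγd)
  have hxeq : xf γ = x := huniq γ hγI _ _ (hxfpb γ hγD) hxpb
  rw [Real.dist_eq, hxeq]
  exact lt_of_le_of_lt hxd (by linarith)
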